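/- Let A ∈ {0,1}^{m×n} be a binary matrix, b ∈ ℕ₊^m a vector of positive integers, W ≥ 1 with W ≤ b_i for all i ∈ [m], λ > 1, and suppose every column of A has at most k nonzero entries (Σ_{i=1}^m A_{ij} ≤ k for every j ∈ [n]). Let ∅ = S_0 ⊂ S_1 ⊂ ⋯ ⊂ S_t ⊆ [n] be a chain with S_ℓ = S_{ℓ−1} ∪ {γ_ℓ}, γ_ℓ ∉ S_{ℓ−1}, and define weights w_{iℓ} = λ^{(Σ_{j∈S_ℓ} A_{ij})/b_i} − 1 (so w_{i0} = 0). If Σ_{i=1}^m A_{iγ_ℓ} w_{i(ℓ−1)} < λ − 1 for every ℓ ∈ {1,…,t}, then t ≥ (Σ_{i=1}^m b_i w_{it}) / (W·λ^{1/W}·(k + λ − 1)). -/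

import Mathlib

open Real

lemma stmt8_exp_slope {u v : ℝ} (hu : 0 < u) (huv : u ≤ v) :
    (Real.exp u - 1) / u ≤ (Real.exp v - 1) / v := by
  have := convexOn_exp.secant_mono (a := 0) (x := u) (y := v)
    (Set.mem_univ _) (Set.mem_univ _) (Set.mem_univ _) hu.ne' (hu.trans_le huv).ne' huv
  simpa using this

lemma stmt8_anti_bound {lam : ℝ} (hlam : 1 < lam) {W B : ℝ} (hW : 0 < W) (hWB : W ≤ B) :
    B * (lam ^ (1 / B) - 1) ≤ W * (lam ^ (1 / W) - 1) := by
  have hB : 0 < B := lt_of_lt_of_le hW hWB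
  have hc : 0 < Real.log lam := Real.log_pos hlam
  have hu : 0 < Real.log lam / B := by positivity
  have huv : Real.log lam / B ≤ Real.log lam / W :=
    div_le_div_of_nonneg_left hc.le hW hWB
  have h := stmt8_exp_slope hu huv
  have e1 : Real.exp (Real.log lam / B) = lam ^ (1 / B) := by
    rw [Real.rpow_def_of_pos (by linarith), one_div, div_eq_inv_mul, mul_comm]
  have e2 : Real.exp (Real.log lam / W) = lam ^ (1 / W) := by
    rw [Real.rpow_def_of_pos (by linarith), one_div, div_eq_inv_mul, mul_comm]
  rw [e1, e2, div_div_eq_mul_div, div_div_eq_mul_div, div_le_div_iff_of_pos_right hc] at h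
  linarith

theorem stmt_8 (m n t : ℕ)
    (A : Fin m → Fin n → ℝ) (hA : ∀ i j, A i j = 0 ∨ A i j = 1)
    (b : Fin m → ℕ) (hb : ∀ i, 1 ≤ b i)
    (W : ℝ) (hW : 1 ≤ W) (hwidth : ∀ i, W ≤ (b i : ℝ))
    (lam : ℝ) (hlam : 1 < lam)
    (k : ℝ) (hsparse : ∀ j, ∑ i, A i j ≤ k)
    (S : ℕ → Finset (Fin n)) (γ : ℕ → Fin n)
    (hS0 : S 0 = ∅)
    (hchain : ∀ ℓ, 1 ≤ ℓ → ℓ ≤ t →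
      γ ℓ ∉ S (ℓ - 1) ∧ S ℓ = insert (γ ℓ) (S (ℓ - 1)))
    (w : Fin m → ℕ → ℝ)
    (hw : ∀ i ℓ, w i ℓ = lam ^ ((∑ j ∈ S ℓ, A i j) / (b i : ℝ)) - 1)
    (hsel : ∀ ℓ, 1 ≤ ℓ → ℓ ≤ t → ∑ i, A i (γ ℓ) * w i (ℓ - 1) < lam - 1) :
    (t : ℝ) ≥ (∑ i, (b i : ℝ) * w i t) / (W * lam ^ (1 / W) * (k + lam - 1)) := by
  have hA0 : ∀ i j, 0 ≤ A i j := fun i j => by rcases hA i j with h | h <;> simp [h]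
  have hk : 0 ≤ k := le_trans (Finset.sum_nonneg fun i _ => hA0 i (γ 0)) (hsparse (γ 0))
  have hWpos : 0 < W := by linarith
  have hlam0 : 0 < lam := by linarith
  have hrW : 0 < lam ^ (1 / W) := Real.rpow_pos_of_pos hlam0 _
  set C := W * lam ^ (1 / W) * (k + lam - 1) with hCdef
  have hCpos : 0 < C := by
    apply mul_pos (mul_pos hWpos hrW); linarith
  have hbpos : ∀ i : Fin m, (0 : ℝ) < b i := fun i => by exact_mod_cast hb i
  have hwnn : ∀ i ℓ, 0 ≤ w i ℓ := by
    intro i ℓ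
    rw [hw]
    have hx : (0 : ℝ) ≤ (∑ j ∈ S ℓ, A i j) / (b i : ℝ) :=
      div_nonneg (Finset.sum_nonneg fun j _ => hA0 i j) (hbpos i).le
    have h : lam ^ (0 : ℝ) ≤ lam ^ ((∑ j ∈ S ℓ, A i j) / (b i : ℝ)) :=
      Real.rpow_le_rpow_of_exponent_le hlam.le hx
    rw [Real.rpow_zero] at h; linarith
  have hw0 : ∀ i, w i 0 = 0 := by
    intro i; rw [hw, hS0]; simp
  have key : ∀ ℓ : ℕ, ℓ ≤ t → ∑ i, (b i : ℝ) * w i ℓ ≤ ℓ * C := by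
    intro ℓ
    induction ℓ with
    | zero => intro _; simp [hw0]
    | succ p ih =>
      intro hlt
      have ihp := ih (by omega)
      obtain ⟨hγ, hSins⟩ := hchain (p + 1) (by omega) hlt
      have hpred : p + 1 - 1 = p := rfl
      rw [hpred] at hγ hSins
      have step : ∀ i, (b i : ℝ) * w i (p + 1) ≤
          (b i : ℝ) * w i p + (W * lam ^ (1 / W)) * (A i (γ (p + 1)) * (w i p + 1)) := by
        intro i
        have hsum : ∑ j ∈ S (p + 1), A i j = A i (γ (p + 1)) + ∑ j ∈ S p, A i j := by
          rw [hSins, Finset.sum_insert hγ]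
        have hwp : w i p = lam ^ ((∑ j ∈ S p, A i j) / (b i : ℝ)) - 1 := hw i p
        rcases hA i (γ (p + 1)) with h0 | h1
        · have heq : w i (p + 1) = w i p := by rw [hw, hw, hsum, h0, zero_add]
          rw [heq, h0]; simp
        · have hE1 : (1 : ℝ) ≤ lam ^ ((∑ j ∈ S p, A i j) / (b i : ℝ)) := by
            have := hwnn i p; rw [hwp] at this; linarith
          have hws : w i (p + 1) =
              lam ^ ((1 : ℝ) / (b i : ℝ)) * lam ^ ((∑ j ∈ S p, A i j) / (b i : ℝ)) - 1 := by
            rw [hw, hsum, h1,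
              show (1 + ∑ j ∈ S p, A i j) / (b i : ℝ)
                = 1 / (b i : ℝ) + (∑ j ∈ S p, A i j) / (b i : ℝ) by ring,
              Real.rpow_add hlam0]
          have hab := stmt8_anti_bound hlam hWpos (hwidth i)
          rw [hws, hwp, h1]
          nlinarith [mul_le_mul_of_nonneg_left hab
              (by linarith : (0 : ℝ) ≤ lam ^ ((∑ j ∈ S p, A i j) / (b i : ℝ))),
            mul_nonneg hWpos.le
              (by linarith : (0 : ℝ) ≤ lam ^ ((∑ j ∈ S p, A i j) / (b i : ℝ))),
            hE1, hWpos, hrW]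
      have sumstep : ∑ i, (b i : ℝ) * w i (p + 1) ≤
          ∑ i, (b i : ℝ) * w i p
            + (W * lam ^ (1 / W)) * (∑ i, A i (γ (p + 1)) * (w i p + 1)) := by
        calc ∑ i, (b i : ℝ) * w i (p + 1)
            ≤ ∑ i, ((b i : ℝ) * w i p
                + (W * lam ^ (1 / W)) * (A i (γ (p + 1)) * (w i p + 1))) :=
              Finset.sum_le_sum fun i _ => step i
          _ = _ := by rw [Finset.sum_add_distrib, Finset.mul_sum]
      have hparts : ∑ i, A i (γ (p + 1)) * (w i p + 1) ≤ (lam - 1) + k := by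
        have h1 := hsel (p + 1) (by omega) hlt
        rw [hpred] at h1
        have h2 := hsparse (γ (p + 1))
        have h3 : ∑ i, A i (γ (p + 1)) * (w i p + 1)
            = ∑ i, A i (γ (p + 1)) * w i p + ∑ i, A i (γ (p + 1)) := by
          rw [← Finset.sum_add_distrib]
          exact Finset.sum_congr rfl fun i _ => by ring
        linarith
      have hmul : (W * lam ^ (1 / W)) * (∑ i, A i (γ (p + 1)) * (w i p + 1)) ≤ C := by
        have := mul_le_mul_of_nonneg_left hparts (mul_pos hWpos hrW).le
        rw [hCdef]; nlinarith [this]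
      have : ∑ i, (b i : ℝ) * w i (p + 1) ≤ p * C + C := by linarith
      push_cast
      linarith
  rw [ge_iff_le, div_le_iff₀ hCpos]
  exact key t le_rfl
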